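/- For self-adjoint operators A, B on a Hilbert space, the anticommutator identity A²B² + B²A² = [AB²A + AB[A,B] + [B,A]BA + ½([A,[A,B]]B + B[[B,A],A])] + [the same expression with A and B interchanged] holds. Consequently, for any sufficiently large universal constant c, A²B² + B²A² ≥ ½(AB²A + BA²B − A² − B²) − c[A,B][B,A] − c[A,[A,B]][[B,A],A] − c[B,[B,A]][[A,B],B]. -/

import Mathlib

open ContinuousLinearMap

/-- Commutator `[A, B] = AB − BA` of bounded operators. -/
def opComm {H : Type*} [NormedAddCommGroup H] [InnerProductSpace ℂ H]
    (A B : H →L[ℂ] H) : H →L[ℂ] H := A * B - B * A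

section stmt13Aux

variable {H : Type*} [NormedAddCommGroup H] [InnerProductSpace ℂ H] [CompleteSpace H]

private lemma stmt13_pos_star_mul (M : H →L[ℂ] H) : (star M * M).IsPositive := by
  simpa [star_eq_adjoint, mul_def] using isPositive_adjoint_comp_self M

private lemma stmt13_pos_smul {r : ℝ} (hr : 0 ≤ r) {T : H →L[ℂ] H} (hT : T.IsPositive) :
    ((r : ℂ) • T).IsPositive := by
  refine isPositive_def'.mpr ⟨IsSelfAdjoint.smul (by simp [IsSelfAdjoint, Complex.star_def, Complex.conj_ofReal]) (isPositive_def'.mp hT).1,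
    fun x => ?_⟩
  have h := hT.2 x
  rw [reApplyInnerSelf_apply] at h ⊢
  rw [smul_apply, inner_smul_left]
  simp only [Complex.star_def, Complex.conj_ofReal]
  rw [← Complex.real_smul, RCLike.smul_re]
  exact mul_nonneg hr h

private lemma stmt13_pos_half_star_mul (M : H →L[ℂ] H) :
    (((1 : ℂ) / 2) • (star M * M)).IsPositive := by
  have h := stmt13_pos_smul (r := 1 / 2) (by norm_num) (stmt13_pos_star_mul M)
  have h2 : (((1 : ℝ) / 2 : ℝ) : ℂ) = (1 : ℂ) / 2 := by push_cast; ring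
  rwa [h2] at h

end stmt13Aux

/-- For bounded self-adjoint `A, B` the anticommutator identity
`A²B² + B²A² = [AB²A + AB[A,B] + [B,A]BA + ½([A,[A,B]]B + B[[B,A],A])] + (A ↔ B)`
holds; consequently, for every sufficiently large universal constant `c`,
`A²B² + B²A² ≥ ½(AB²A + BA²B − A² − B²) − c[A,B][B,A] − c[A,[A,B]][[B,A],A]
  − c[B,[B,A]][[A,B],B]`. -/
theorem stmt13 {H : Type*} [NormedAddCommGroup H] [InnerProductSpace ℂ H]
    [CompleteSpace H] :
    (∀ A B : H →L[ℂ] H, IsSelfAdjoint A → IsSelfAdjoint B →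
      A ^ 2 * B ^ 2 + B ^ 2 * A ^ 2 =
        (A * B ^ 2 * A + A * B * opComm A B + opComm B A * B * A
          + ((1 : ℂ) / 2) • (opComm A (opComm A B) * B + B * opComm (opComm B A) A))
        + (B * A ^ 2 * B + B * A * opComm B A + opComm A B * A * B
          + ((1 : ℂ) / 2) • (opComm B (opComm B A) * A + A * opComm (opComm A B) B))) ∧
    ∃ c₀ : ℝ, ∀ c : ℝ, c₀ ≤ c → ∀ A B : H →L[ℂ] H,
      IsSelfAdjoint A → IsSelfAdjoint B →
      ((A ^ 2 * B ^ 2 + B ^ 2 * A ^ 2) -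
        (((1 : ℂ) / 2) • (A * B ^ 2 * A + B * A ^ 2 * B - A ^ 2 - B ^ 2)
          - (c : ℂ) • (opComm A B * opComm B A)
          - (c : ℂ) • (opComm A (opComm A B) * opComm (opComm B A) A)
          - (c : ℂ) • (opComm B (opComm B A) * opComm (opComm A B) B))).IsPositive := by
  constructor
  · intro A B hA hB
    have E1 : (A ^ 2 * B ^ 2 + B ^ 2 * A ^ 2) + (A ^ 2 * B ^ 2 + B ^ 2 * A ^ 2) =
        ((A * B ^ 2 * A + A * B * opComm A B + opComm B A * B * A)
          + (A * B ^ 2 * A + A * B * opComm A B + opComm B A * B * A)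
          + (opComm A (opComm A B) * B + B * opComm (opComm B A) A))
        + ((B * A ^ 2 * B + B * A * opComm B A + opComm A B * A * B)
          + (B * A ^ 2 * B + B * A * opComm B A + opComm A B * A * B)
          + (opComm B (opComm B A) * A + A * opComm (opComm A B) B)) := by
      simp only [opComm]; noncomm_ring
    linear_combination (norm := module) ((1 : ℂ) / 2) • E1
  · refine ⟨4, fun c hc A B hA hB => ?_⟩
    have hn1 : star (B * A + opComm A B + opComm A B) = A * B + opComm B A + opComm B A := by
      simp only [opComm, star_add, star_sub, star_mul, hA.star_eq, hB.star_eq]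
    have hn2 : star (opComm B A + opComm B A + A * B) = opComm A B + opComm A B + B * A := by
      simp only [opComm, star_add, star_sub, star_mul, hA.star_eq, hB.star_eq]
    have hp : star (opComm A (opComm A B) + B) = opComm A (opComm A B) + B := by
      simp only [opComm, star_add, star_sub, star_mul, hA.star_eq, hB.star_eq]
      noncomm_ring
    have hq : star (opComm B (opComm B A) + A) = opComm B (opComm B A) + A := by
      simp only [opComm, star_add, star_sub, star_mul, hA.star_eq, hB.star_eq]
      noncomm_ring
    have hm1 : star (opComm B A) = opComm A B := by
      simp only [opComm, star_sub, star_mul, hA.star_eq, hB.star_eq]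
    have hm2 : star (opComm (opComm B A) A) = opComm A (opComm A B) := by
      simp only [opComm, star_sub, star_mul, hA.star_eq, hB.star_eq]
    have hm3 : star (opComm (opComm A B) B) = opComm B (opComm B A) := by
      simp only [opComm, star_sub, star_mul, hA.star_eq, hB.star_eq]
    have E2 : ((A ^ 2 * B ^ 2 + B ^ 2 * A ^ 2) + (A ^ 2 * B ^ 2 + B ^ 2 * A ^ 2))
          - (A * B ^ 2 * A + B * A ^ 2 * B - A ^ 2 - B ^ 2) =
        ((A * B + opComm B A + opComm B A) * (B * A + opComm A B + opComm A B)
          + (opComm A B + opComm A B + B * A) * (opComm B A + opComm B A + A * B)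
          + (opComm A (opComm A B) + B) * (opComm A (opComm A B) + B)
          + (opComm B (opComm B A) + A) * (opComm B (opComm B A) + A))
        - (opComm A B * opComm B A + opComm A B * opComm B A + opComm A B * opComm B A
          + opComm A B * opComm B A + opComm A B * opComm B A + opComm A B * opComm B A
          + opComm A B * opComm B A + opComm A B * opComm B A)
        - opComm A (opComm A B) * opComm (opComm B A) A
        - opComm B (opComm B A) * opComm (opComm A B) B := by
      simp only [opComm]; noncomm_ring
    have key : (A ^ 2 * B ^ 2 + B ^ 2 * A ^ 2) -
          (((1 : ℂ) / 2) • (A * B ^ 2 * A + B * A ^ 2 * B - A ^ 2 - B ^ 2)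
            - (c : ℂ) • (opComm A B * opComm B A)
            - (c : ℂ) • (opComm A (opComm A B) * opComm (opComm B A) A)
            - (c : ℂ) • (opComm B (opComm B A) * opComm (opComm A B) B)) =
        ((1 : ℂ) / 2) •
            (star (B * A + opComm A B + opComm A B) * (B * A + opComm A B + opComm A B))
        + ((1 : ℂ) / 2) •
            (star (opComm B A + opComm B A + A * B) * (opComm B A + opComm B A + A * B))
        + ((1 : ℂ) / 2) • (star (opComm A (opComm A B) + B) * (opComm A (opComm A B) + B))
        + ((1 : ℂ) / 2) • (star (opComm B (opComm B A) + A) * (opComm B (opComm B A) + A))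
        + ((c - 4 : ℝ) : ℂ) • (star (opComm B A) * opComm B A)
        + ((c - 1 / 2 : ℝ) : ℂ) • (star (opComm (opComm B A) A) * opComm (opComm B A) A)
        + ((c - 1 / 2 : ℝ) : ℂ) • (star (opComm (opComm A B) B) * opComm (opComm A B) B) := by
      rw [hn1, hn2, hp, hq, hm1, hm2, hm3]
      push_cast
      linear_combination (norm := module) ((1 : ℂ) / 2) • E2
    rw [key]
    exact ((((((stmt13_pos_half_star_mul _).add (stmt13_pos_half_star_mul _)).add
      (stmt13_pos_half_star_mul _)).add (stmt13_pos_half_star_mul _)).add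
      (stmt13_pos_smul (by linarith) (stmt13_pos_star_mul _))).add
      (stmt13_pos_smul (by linarith) (stmt13_pos_star_mul _))).add
      (stmt13_pos_smul (by linarith) (stmt13_pos_star_mul _))
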